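/- Let m ≥ 2 be an integer, let Q be the quadratic form Q(x) = x₁² + x₂² + x₃² on ℝ³, and let ι : ℝ³ → CliffordAlgebra Q be the canonical embedding (so that ι(v)² = Q(v)·1 for all v). Set α₀ = (0, 0, 1) and α_j = (sin(jπ/m), −cos(jπ/m), 0) for 1 ≤ j ≤ m. Then ι(α₀)² = ι(α₁)² = ι(α_m)² = 1, (ι(α₀)ι(α₁))² = (ι(α₀)ι(α_m))² = −1, and (ι(α₁)ι(α_m))^m = (−1)^{m+1}. -/

import Mathlib

open Real CliffordAlgebra

private lemma aux_sq {Q : QuadraticForm ℝ (Fin 3 → ℝ)} {v : Fin 3 → ℝ} (h : Q v = 1) :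
    (CliffordAlgebra.ι Q v) ^ 2 = 1 := by
  rw [sq, ι_sq_scalar, h, map_one]

private lemma aux_ortho {Q : QuadraticForm ℝ (Fin 3 → ℝ)} {u v : Fin 3 → ℝ}
    (hu : Q u = 1) (hv : Q v = 1) (hp : QuadraticMap.polar Q u v = 0) :
    (CliffordAlgebra.ι Q u * CliffordAlgebra.ι Q v) ^ 2 = -1 := by
  have h := ι_mul_ι_comm (Q := Q) v u
  rw [QuadraticMap.polar_comm, hp, map_zero, zero_sub] at h
  calc (ι Q u * ι Q v)^2 = ι Q u * (ι Q v * ι Q u) * ι Q v := by noncomm_ring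
    _ = -(ι Q u * ι Q u * (ι Q v * ι Q v)) := by rw [h]; noncomm_ring
    _ = -1 := by rw [ι_sq_scalar, ι_sq_scalar, hu, hv, map_one, mul_one]

private lemma sin_rec (φ : ℝ) (a : ℝ) :
    Real.sin (a + φ) = 2 * Real.cos φ * Real.sin a - Real.sin (a - φ) := by
  rw [Real.sin_add, Real.sin_sub]; ring

private lemma aux_pow {Q : QuadraticForm ℝ (Fin 3 → ℝ)} {u v : Fin 3 → ℝ} {φ : ℝ}
    (hu : Q u = 1) (hv : Q v = 1) (hp : QuadraticMap.polar Q u v = 2 * Real.cos φ) :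
    ∀ n : ℕ, Real.sin φ • (CliffordAlgebra.ι Q u * CliffordAlgebra.ι Q v) ^ (n + 1)
      = Real.sin ((n + 1) * φ) • (CliffordAlgebra.ι Q u * CliffordAlgebra.ι Q v)
        - Real.sin (n * φ) • 1 := by
  set x := CliffordAlgebra.ι Q u * CliffordAlgebra.ι Q v with hx
  have hsq : x * x = (2 * Real.cos φ) • x - 1 := by
    have h := ι_mul_ι_comm (Q := Q) v u
    rw [QuadraticMap.polar_comm, hp] at h
    calc x * x = ι Q u * (ι Q v * ι Q u) * ι Q v := by rw [hx]; noncomm_ring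
      _ = ι Q u * algebraMap ℝ _ (2 * Real.cos φ) * ι Q v
            - ι Q u * ι Q u * (ι Q v * ι Q v) := by rw [h]; noncomm_ring
      _ = (2 * Real.cos φ) • x - 1 := by
          rw [ι_sq_scalar, ι_sq_scalar, hu, hv, map_one, mul_one,
            Algebra.algebraMap_eq_smul_one, hx]
          rw [mul_smul_comm, mul_one, smul_mul_assoc]
  intro n
  induction n with
  | zero => simp
  | succ k ih =>
      have h2 : x ^ (k + 1 + 1) = x ^ (k + 1) * x := pow_succ x (k+1)
      rw [h2, ← smul_mul_assoc, ih, sub_mul, smul_mul_assoc, smul_mul_assoc, hsq,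
        one_mul]
      have h3 : Real.sin ((↑(k + 1) + 1) * φ)
          = 2 * Real.cos φ * Real.sin ((↑k + 1) * φ) - Real.sin (↑k * φ) := by
        have := sin_rec φ ((↑k + 1) * φ)
        rw [show ((↑k:ℝ) + 1) * φ + φ = ((↑(k+1):ℝ) + 1) * φ by push_cast; ring,
          show ((↑k:ℝ) + 1) * φ - φ = (↑k:ℝ) * φ by ring] at this
        exact this
      rw [h3]
      push_cast
      module

/-- The Clifford-algebra relations satisfied by the images of the simple roots
`α₀ = (0,0,1)`, `α₁ = (sin(π/m), −cos(π/m), 0)` and `α_m = (sin(mπ/m), −cos(mπ/m), 0)`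
of the root system `A₁ ⊕ I₂(m)` under the canonical embedding into the Clifford
algebra of the standard quadratic form on ℝ³: they generate the positive double
covering of `ℤ₂ × D_{2m}` with central element realized as `−1`. -/
theorem clifford_double_cover_relations
    (m : ℕ) (hm : 2 ≤ m)
    (Q : QuadraticForm ℝ (Fin 3 → ℝ))
    (hQ : ∀ x : Fin 3 → ℝ, Q x = x 0 ^ 2 + x 1 ^ 2 + x 2 ^ 2) :
    let ι := CliffordAlgebra.ι Q
    let α₀ : Fin 3 → ℝ := ![0, 0, 1]
    let α : ℕ → Fin 3 → ℝ := fun j =>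
      ![Real.sin (j * Real.pi / m), -Real.cos (j * Real.pi / m), 0]
    (ι α₀) ^ 2 = 1 ∧ (ι (α 1)) ^ 2 = 1 ∧ (ι (α m)) ^ 2 = 1 ∧
    (ι α₀ * ι (α 1)) ^ 2 = -1 ∧ (ι α₀ * ι (α m)) ^ 2 = -1 ∧
    (ι (α 1) * ι (α m)) ^ m = (-1 : CliffordAlgebra Q) ^ (m + 1) := by
  intro ι α₀ α
  have hm0 : (m : ℝ) ≠ 0 := by positivity
  have hα₀ : Q α₀ = 1 := by simp [hQ, α₀]
  have hαj : ∀ j : ℕ, Q (α j) = 1 := by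
    intro j
    simp only [hQ, α, Matrix.cons_val_zero, Matrix.cons_val_one, Matrix.head_cons,
      Matrix.cons_val_two, Matrix.tail_cons]
    linear_combination Real.sin_sq_add_cos_sq ((j : ℝ) * Real.pi / m)
  have hpol0 : ∀ j : ℕ, QuadraticMap.polar Q α₀ (α j) = 0 := by
    intro j
    simp only [QuadraticMap.polar, hQ, Pi.add_apply, α, α₀, Matrix.cons_val_zero,
      Matrix.cons_val_one, Matrix.head_cons, Matrix.cons_val_two, Matrix.tail_cons]
    ring
  set φ : ℝ := Real.pi - Real.pi / m with hφ
  have hθm : (m : ℝ) * Real.pi / m = Real.pi := by field_simp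
  have hpol1 : QuadraticMap.polar Q (α 1) (α m) = 2 * Real.cos φ := by
    simp only [QuadraticMap.polar, hQ, Pi.add_apply, α, Matrix.cons_val_zero,
      Matrix.cons_val_one, Matrix.head_cons, Matrix.cons_val_two, Matrix.tail_cons,
      hθm, Real.sin_pi, Real.cos_pi, hφ, Real.cos_pi_sub, Nat.cast_one, one_mul]
    ring
  refine ⟨aux_sq hα₀, aux_sq (hαj 1), aux_sq (hαj m),
    aux_ortho hα₀ (hαj 1) (hpol0 1), aux_ortho hα₀ (hαj m) (hpol0 m), ?_⟩
  obtain ⟨k, rfl⟩ : ∃ k, m = k + 2 := ⟨m - 2, by omega⟩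
  have hkey := aux_pow (hαj 1) (hαj (k + 2)) hpol1 (k + 1)
  have hsφ : Real.sin φ ≠ 0 := by
    rw [hφ, Real.sin_pi_sub]
    have h1 : 0 < Real.pi / (k + 2 : ℕ) := by positivity
    have h2 : Real.pi / (k + 2 : ℕ) < Real.pi := by
      rw [div_lt_iff₀ (by positivity)]
      have h3 : (1:ℝ) < ((k + 2 : ℕ) : ℝ) := by exact_mod_cast (by omega : 1 < k + 2)
      nlinarith [Real.pi_pos]
    exact ne_of_gt (Real.sin_pos_of_pos_of_lt_pi h1 h2)
  push_cast at hkey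
  have e1 : ((k : ℝ) + 1 + 1) * φ = (↑(k + 1) : ℕ) * Real.pi := by
    push_cast
    rw [hφ]
    field_simp
    push_cast
    ring
  have e2 : ((k : ℝ) + 1) * φ = (↑(k + 1) : ℕ) * Real.pi - φ := by
    push_cast
    rw [hφ]
    field_simp
    push_cast
    ring
  rw [e1, e2, Real.sin_nat_mul_pi, Real.sin_nat_mul_pi_sub, zero_smul, zero_sub] at hkey
  have : (CliffordAlgebra.ι Q (α 1) * CliffordAlgebra.ι Q (α (k + 2))) ^ (k + 1 + 1)
      = ((-1 : ℝ) ^ (k + 2 + 1)) • (1 : CliffordAlgebra Q) := by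
    have := congrArg (fun y => (Real.sin φ)⁻¹ • y) hkey
    simp only [smul_smul, inv_mul_cancel₀ hsφ, one_smul] at this
    rw [this, neg_smul, smul_neg, smul_neg, neg_neg, smul_smul]
    congr 1
    field_simp
    ring
  show (CliffordAlgebra.ι Q (α 1) * CliffordAlgebra.ι Q (α (k + 2))) ^ (k + 2)
      = (-1 : CliffordAlgebra Q) ^ (k + 2 + 1)
  rw [show k + 2 = k + 1 + 1 from rfl, this]
  rw [show ((-1 : ℝ) ^ (k + 2 + 1)) • (1 : CliffordAlgebra Q)
      = algebraMap ℝ _ ((-1 : ℝ) ^ (k + 2 + 1)) from (Algebra.algebraMap_eq_smul_one _).symm,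
    map_pow, map_neg, map_one]
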